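/- Let A and B be commutative unital complex Banach algebras and let f : A → B be a continuous injective unital algebra homomorphism such that B is an integral extension of f(A), i.e., every element b ∈ B is a root of some monic polynomial with coefficients in the image f(A). If the set of invertible elements of A is dense in A, then the set of invertible elements of B is dense in B. -/

import Mathlib

open Polynomial Filter Metric Topology

section aux

variable {A : Type*} [NormedCommRing A] [NormedAlgebra ℂ A]

/-- Strict Fréchet derivative of polynomial evaluation in a commutative normed `ℂ`-algebra. -/
lemma evalHasStrictFDerivAt (P : A[X]) (x : A) :
    HasStrictFDerivAt (fun y : A => P.eval y)
      (ContinuousLinearMap.mul ℂ A (P.derivative.eval x)) x := by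
  induction P using Polynomial.induction_on with
  | C a =>
      simpa using (hasStrictFDerivAt_const a x)
  | add p q hp hq =>
      simpa [derivative_add, eval_add, map_add] using (show HasStrictFDerivAt (fun y : A => p.eval y + q.eval y)
        (ContinuousLinearMap.mul ℂ A (p.derivative.eval x) + ContinuousLinearMap.mul ℂ A (q.derivative.eval x)) x
        from hp.add hq)
  | monomial n a ih =>
      have hid : HasStrictFDerivAt (fun y : A => y) (ContinuousLinearMap.id ℂ A) x :=
        hasStrictFDerivAt_id x
      have h := (ih.mul hid : HasStrictFDerivAt (fun y : A => (C a * X ^ n).eval y * y) _ x)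
      have hfun : (fun y : A => (C a * X ^ n).eval y * y)
          = fun y : A => (C a * X ^ (n+1)).eval y := by
        funext y; simp [pow_succ, mul_assoc]
      rw [hfun] at h
      have key : derivative (C a * X ^ (n+1))
          = derivative (C a * X ^ n) * X + C a * X ^ n := by
        conv_lhs => rw [pow_succ, ← mul_assoc]
        rw [derivative_mul, derivative_X, mul_one]
      convert h using 1
      ext v
      simp [key, ContinuousLinearMap.mul_apply']
      ring

end aux

section crux

variable {A : Type*} [NormedCommRing A] [NormedAlgebra ℂ A] [CompleteSpace A]

/-- Key lemma: if the invertibles are dense in `A`, then for each monic polynomial `P` over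
`A` there exist arbitrarily small `c` with `P(c)` invertible. -/
lemma crux (hA : Dense {a : A | IsUnit a}) :
    ∀ (n : ℕ) (P : A[X]), P.Monic → P.natDegree = n → ∀ ε > 0,
      ∃ c : A, ‖c‖ < ε ∧ IsUnit (P.eval c) := by
  intro n
  induction n with
  | zero =>
      intro P hP hd ε hε
      refine ⟨0, by simpa using hε, ?_⟩
      rw [hP.natDegree_eq_zero.mp hd]
      simp
  | succ n IH =>
      intro P hP hd ε hε
      rcases subsingleton_or_nontrivial A with hs | hnt
      · exact ⟨0, by simpa using hε, isUnit_of_subsingleton _⟩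
      -- `(n+1 : A)` is a unit
      have hu : IsUnit (((n+1 : ℕ) : A)) := by
        have h1 : IsUnit (((n+1 : ℕ) : ℂ)) :=
          isUnit_iff_ne_zero.mpr (by exact_mod_cast Nat.succ_ne_zero n)
        have := h1.map (algebraMap ℂ A)
        rwa [map_natCast] at this
      obtain ⟨w, hw⟩ := hu
      set Pd : A[X] := C ((↑w⁻¹ : A)) * P.derivative with hPddef
      have hco : P.derivative.coeff n = ((n+1 : ℕ) : A) := by
        rw [coeff_derivative]
        rw [show P.coeff (n+1) = 1 from by simpa [hd] using hP.coeff_natDegree, one_mul]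
        push_cast
        ring
      have hdegle : Pd.natDegree ≤ n := by
        refine le_trans (natDegree_C_mul_le _ _) ?_
        refine le_trans (natDegree_derivative_le P) ?_
        simp [hd]
      have hPdc : Pd.coeff n = 1 := by
        rw [hPddef, coeff_C_mul, hco, ← hw]
        exact w.inv_mul
      have hPdm : Pd.Monic := monic_of_natDegree_le_of_coeff_eq_one n hdegle hPdc
      have hPdd : Pd.natDegree = n :=
        le_antisymm hdegle (le_natDegree_of_ne_zero (by rw [hPdc]; exact one_ne_zero))
      obtain ⟨e, he, heu⟩ := IH Pd hPdm hPdd (ε/2) (by positivity)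
      have hderiv_unit : IsUnit (P.derivative.eval e) := by
        have h2 : (w : A) * Pd.eval e = P.derivative.eval e := by
          rw [hPddef, eval_mul, eval_C, ← mul_assoc, Units.mul_inv, one_mul]
        rw [← h2]
        exact w.isUnit.mul heu
      obtain ⟨u, hu'⟩ := hderiv_unit
      set L : A ≃L[ℂ] A :=
        ContinuousLinearEquiv.equivOfInverse (ContinuousLinearMap.mul ℂ A (u : A))
          (ContinuousLinearMap.mul ℂ A ((↑u⁻¹ : Aˣ) : A))
          (fun x => by simp [ContinuousLinearMap.mul_apply', ← mul_assoc, Units.inv_mul])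
          (fun x => by simp [ContinuousLinearMap.mul_apply', ← mul_assoc, Units.mul_inv])
        with hLdef
      have hstrict : HasStrictFDerivAt (fun y : A => P.eval y) (L : A →L[ℂ] A) e := by
        have hLeq : (L : A →L[ℂ] A) = ContinuousLinearMap.mul ℂ A (P.derivative.eval e) := by
          rw [← hu']
          rfl
        rw [hLeq]
        exact evalHasStrictFDerivAt P e
      have hmap := hstrict.map_nhds_eq_of_equiv
      have himg : (fun y : A => P.eval y) '' (Metric.ball e (ε/2)) ∈ 𝓝 (P.eval e) := by
        rw [← hmap]
        exact Filter.image_mem_map (Metric.ball_mem_nhds e (by positivity))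
      obtain ⟨V, hVsub, hVopen, hVmem⟩ := _root_.mem_nhds_iff.mp himg
      obtain ⟨v, hvunit, hvV⟩ := hA.exists_mem_open hVopen ⟨_, hVmem⟩
      obtain ⟨c, hcball, hceq⟩ := hVsub hvV
      refine ⟨c, ?_, ?_⟩
      · have hce : ‖c - e‖ < ε/2 := by
          rw [← dist_eq_norm]; exact Metric.mem_ball.mp hcball
        calc ‖c‖ = ‖(c - e) + e‖ := by ring_nf
          _ ≤ ‖c - e‖ + ‖e‖ := norm_add_le _ _
          _ < ε/2 + ε/2 := add_lt_add hce he
          _ = ε := by ring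
      · simp only at hceq
        rw [hceq]; exact hvunit

end crux


/-- **Theorem 2.3.** Let `B` be a commutative unital complex Banach algebra which is an
integral extension of the commutative unital complex Banach algebra `A` (via a continuous
injective unital algebra homomorphism `f : A → B`: every `b ∈ B` is a root of a monic
polynomial with coefficients in `f(A)`).  If `A` has dense invertible group then so has `B`. -/
theorem dense_invertibles_of_integral_extension
    (A B : Type*) [NormedCommRing A] [NormedAlgebra ℂ A] [CompleteSpace A]
    [NormedCommRing B] [NormedAlgebra ℂ B] [CompleteSpace B]
    (f : A →ₐ[ℂ] B) (hcont : Continuous f) (hinj : Function.Injective f)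
    (hint : ∀ b : B, ∃ p : Polynomial A, p.Monic ∧ Polynomial.eval₂ f.toRingHom b p = 0)
    (hA : Dense {a : A | IsUnit a}) :
    Dense {b : B | IsUnit b} := by
  rw [Metric.dense_iff]
  intro b r hr
  obtain ⟨δ, hδ, hδf⟩ : ∃ δ > 0, ∀ d : A, ‖d‖ < δ → ‖f d‖ < r := by
    obtain ⟨δ, hδ, h⟩ := Metric.continuous_iff.mp hcont 0 r hr
    refine ⟨δ, hδ, fun d hd => ?_⟩
    have := h d (by simpa [dist_eq_norm] using hd)
    simpa [dist_eq_norm, map_zero] using this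
  obtain ⟨p, hpm, hproot⟩ := hint b
  obtain ⟨d, hd, hdu⟩ := crux hA p.natDegree p hpm rfl δ hδ
  set q : Polynomial A := p.comp (X + C d) with hqdef
  have hqroot : Polynomial.eval₂ f.toRingHom (b - f d) q = 0 := by
    rw [hqdef, Polynomial.eval₂_comp]
    have h1 : Polynomial.eval₂ f.toRingHom (b - f d) (X + C d) = b := by
      simp
    rw [h1, hproot]
  have hq0 : q.coeff 0 = p.eval d := by
    rw [Polynomial.coeff_zero_eq_eval_zero, hqdef, Polynomial.eval_comp]
    simp
  set s : B := Polynomial.eval₂ f.toRingHom (b - f d) q.divX with hsdef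
  have key : (b - f d) * s = -(f.toRingHom (q.coeff 0)) := by
    have h2 := congrArg (Polynomial.eval₂ f.toRingHom (b - f d)) (Polynomial.X_mul_divX_add q)
    rw [hqroot] at h2
    simp only [Polynomial.eval₂_add, Polynomial.eval₂_mul, Polynomial.eval₂_X,
      Polynomial.eval₂_C] at h2
    linear_combination h2
  have hunit : IsUnit (b - f d) := by
    have hu2 : IsUnit (f.toRingHom (q.coeff 0)) := by
      rw [hq0]; exact hdu.map f.toRingHom
    obtain ⟨v, hv⟩ := hu2.neg
    have h3 : (b - f d) * (s * (↑v⁻¹ : B)) = 1 := by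
      rw [← mul_assoc, key, ← hv, Units.mul_inv]
    exact IsUnit.of_mul_eq_one _ h3
  refine ⟨b - f d, ?_, hunit⟩
  rw [Metric.mem_ball, dist_eq_norm]
  simpa using hδf d hd
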